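/- Let D ≥ 1, let Φ : ℝ^D → ℝ be a continuous, integrable function whose Fourier transform F Φ is strictly positive almost everywhere, and let χ_0 = (∏_{i=1}^D l_i)^{-1} · 1_{TR_0} be the normalized indicator of the box TR_0 = ∏_{i=1}^D [-l_i/2, l_i/2] with l_i > 0. Then for every integrable function f : ℝ^D → ℝ, the weighted spectral energy is not increased by convolution with χ_0: ∫_{ℝ^D} |F(f ∗ χ_0)(ω)|² / (F Φ)(ω) dω ≤ ∫_{ℝ^D} |(F f)(ω)|² / (F Φ)(ω) dω (both sides possibly infinite). -/

import Mathlib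

open MeasureTheory
open scoped ENNReal NNReal

/-- The axis-aligned box `∏ i, [-lᵢ/2, lᵢ/2]` centered at the origin in `ℝ^D`. -/
def trustRegion (D : ℕ) (l : Fin D → ℝ) : Set (Fin D → ℝ) :=
  Set.univ.pi fun i => Set.Icc (-(l i) / 2) (l i / 2)

/-- The normalized indicator function `χ₀ = (∏ i, lᵢ)⁻¹ · 1_{TR₀}`. -/
noncomputable def normIndicator (D : ℕ) (l : Fin D → ℝ) : (Fin D → ℝ) → ℝ :=
  Set.indicator (trustRegion D l) fun _ => (∏ i, l i)⁻¹

/-- The Fourier transform `(F f)(ω) = ∫ f(x) exp(-i x·ω) dx` of a function on `ℝ^D`. -/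
noncomputable def fourierTransform (D : ℕ) (f : (Fin D → ℝ) → ℝ) (ω : Fin D → ℝ) : ℂ :=
  ∫ x, (f x : ℂ) * Complex.exp (-Complex.I * ((∑ i, x i * ω i : ℝ) : ℂ))

/-- The convolution `(f ∗ g)(x) = ∫ f(y) g(x - y) dy` of real functions on `ℝ^D`. -/
noncomputable def conv (D : ℕ) (f g : (Fin D → ℝ) → ℝ) (x : Fin D → ℝ) : ℝ :=
  ∫ y, f y * g (x - y)

namespace WSE

noncomputable def eker (D : ℕ) (ω x : Fin D → ℝ) : ℂ :=
  Complex.exp (-Complex.I * ((∑ i, x i * ω i : ℝ) : ℂ))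

lemma norm_eker (D : ℕ) (ω x : Fin D → ℝ) : ‖eker D ω x‖ = 1 := by
  rw [eker, Complex.norm_exp]
  simp

lemma eker_add (D : ℕ) (ω x y : Fin D → ℝ) :
    eker D ω (x + y) = eker D ω x * eker D ω y := by
  simp only [eker, ← Complex.exp_add]
  congr 1
  have : (∑ i, (x + y) i * ω i) = (∑ i, x i * ω i) + ∑ i, y i * ω i := by
    rw [← Finset.sum_add_distrib]
    exact Finset.sum_congr rfl fun i _ => by simp [add_mul]
  rw [this]
  push_cast
  ring

lemma continuous_eker (D : ℕ) (ω : Fin D → ℝ) : Continuous (eker D ω) := by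
  apply Complex.continuous_exp.comp
  exact (continuous_const.mul (Complex.continuous_ofReal.comp
    (continuous_finset_sum _ fun i _ => (continuous_apply i).mul continuous_const)))

lemma fourier_eq (D : ℕ) (f : (Fin D → ℝ) → ℝ) (ω : Fin D → ℝ) :
    fourierTransform D f ω = ∫ x, (f x : ℂ) * eker D ω x := rfl

/-- The convolution theorem. -/
lemma fourier_conv (D : ℕ) (f g : (Fin D → ℝ) → ℝ)
    (hf : Integrable f) (hg : Integrable g) (ω : Fin D → ℝ) :
    fourierTransform D (conv D f g) ω = fourierTransform D f ω * fourierTransform D g ω := by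
  have hint : Integrable (fun p : (Fin D → ℝ) × (Fin D → ℝ) => f p.2 * g (p.1 - p.2))
      (volume.prod volume) :=
    hf.convolution_integrand (ContinuousLinearMap.mul ℝ ℝ) hg
  have hint2 : Integrable
      (fun p : (Fin D → ℝ) × (Fin D → ℝ) => ((f p.2 * g (p.1 - p.2) : ℝ) : ℂ) * eker D ω p.1)
      (volume.prod volume) := by
    have := (hint.ofReal (𝕜 := ℂ)).bdd_mul
      (f := fun p : (Fin D → ℝ) × (Fin D → ℝ) => eker D ω p.1)
      (((continuous_eker D ω).comp continuous_fst).aestronglyMeasurable) (c := 1)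
      (Filter.Eventually.of_forall fun p => le_of_eq (norm_eker D ω p.1))
    simpa [mul_comm] using this
  calc fourierTransform D (conv D f g) ω
      = ∫ x, ∫ y, ((f y * g (x - y) : ℝ) : ℂ) * eker D ω x := by
        rw [fourier_eq]
        refine integral_congr_ae (Filter.Eventually.of_forall fun x => ?_)
        simp only [conv]
        rw [show ((∫ y, f y * g (x - y) : ℝ) : ℂ) = ∫ y, ((f y * g (x - y) : ℝ) : ℂ) from
          (integral_ofReal).symm, ← integral_mul_const]
    _ = ∫ y, ∫ x, ((f y * g (x - y) : ℝ) : ℂ) * eker D ω x := by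
        exact integral_integral_swap hint2
    _ = ∫ y, (f y : ℂ) * eker D ω y * ∫ u, (g u : ℂ) * eker D ω u := by
        refine integral_congr_ae (Filter.Eventually.of_forall fun y => ?_)
        dsimp only
        have key : ∫ x, ((f y * g (x - y) : ℝ) : ℂ) * eker D ω x
            = ∫ u, ((f y * g u : ℝ) : ℂ) * eker D ω (u + y) := by
          rw [← integral_add_right_eq_self
            (fun x => ((f y * g (x - y) : ℝ) : ℂ) * eker D ω x) y]
          simp
        rw [key]
        have : ∀ u, ((f y * g u : ℝ) : ℂ) * eker D ω (u + y)
            = ((f y : ℂ) * eker D ω y) * ((g u : ℂ) * eker D ω u) := by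
          intro u
          rw [eker_add]
          push_cast
          ring
        simp_rw [this]
        rw [integral_const_mul]
    _ = fourierTransform D f ω * fourierTransform D g ω := by
        rw [fourier_eq, fourier_eq, ← integral_mul_const]

lemma normIndicator_integrable (D : ℕ) (l : Fin D → ℝ) :
    Integrable (normIndicator D l) := by
  rw [normIndicator, integrable_indicator_iff]
  · refine integrableOn_const ?_
    rw [trustRegion, volume_pi_pi]
    exact (ENNReal.prod_lt_top fun i _ => by simp).ne
  · exact MeasurableSet.univ_pi fun i => measurableSet_Icc

lemma normIndicator_integral (D : ℕ) (l : Fin D → ℝ) (hl : ∀ i, 0 < l i) :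
    ∫ x, normIndicator D l x = 1 := by
  have hs : MeasurableSet (trustRegion D l) :=
    MeasurableSet.univ_pi fun i => measurableSet_Icc
  rw [normIndicator, integral_indicator_const _ hs]
  rw [measureReal_def, trustRegion, volume_pi_pi]
  have h1 : ∀ i, volume (Set.Icc (-(l i) / 2) (l i / 2)) = ENNReal.ofReal (l i) := by
    intro i
    rw [Real.volume_Icc]
    congr 1
    ring
  simp_rw [h1]
  rw [← ENNReal.ofReal_prod_of_nonneg fun i _ => (hl i).le,
    ENNReal.toReal_ofReal (Finset.prod_nonneg fun i _ => (hl i).le)]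
  rw [smul_eq_mul, mul_inv_cancel₀ (Finset.prod_pos fun i _ => hl i).ne']

lemma norm_fourier_normIndicator_le (D : ℕ) (l : Fin D → ℝ) (hl : ∀ i, 0 < l i)
    (ω : Fin D → ℝ) : ‖fourierTransform D (normIndicator D l) ω‖ ≤ 1 := by
  rw [fourier_eq]
  calc ‖∫ x, (normIndicator D l x : ℂ) * eker D ω x‖
      ≤ ∫ x, ‖(normIndicator D l x : ℂ) * eker D ω x‖ := norm_integral_le_integral_norm _
    _ = ∫ x, normIndicator D l x := by
        refine integral_congr_ae (Filter.Eventually.of_forall fun x => ?_)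
        dsimp only
        rw [norm_mul, norm_eker, mul_one, Complex.norm_real, Real.norm_eq_abs, abs_of_nonneg]
        rw [normIndicator]
        exact Set.indicator_nonneg (fun _ _ => inv_nonneg.2
          (Finset.prod_nonneg fun i _ => (hl i).le)) x
    _ = 1 := normIndicator_integral D l hl

end WSE

/-- If `Φ` is continuous and integrable with a.e. strictly positive Fourier transform,
then for every integrable `f`, the weighted spectral energy `∫ |F f|² / (F Φ)` is not
increased by convolution with the normalized box indicator `χ₀`. -/
theorem weighted_spectral_energy_conv_le
    (D : ℕ) (hD : 1 ≤ D) (l : Fin D → ℝ) (hl : ∀ i, 0 < l i)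
    (Φ : (Fin D → ℝ) → ℝ) (hΦc : Continuous Φ) (hΦi : Integrable Φ)
    (hFΦ : ∀ᵐ ω ∂(volume), 0 < (fourierTransform D Φ ω).re ∧
      (fourierTransform D Φ ω).im = 0)
    (f : (Fin D → ℝ) → ℝ) (hf : Integrable f) :
    ∫⁻ ω, (‖fourierTransform D (conv D f (normIndicator D l)) ω‖₊ : ℝ≥0∞) ^ 2 /
        ENNReal.ofReal ((fourierTransform D Φ ω).re)
      ≤ ∫⁻ ω, (‖fourierTransform D f ω‖₊ : ℝ≥0∞) ^ 2 /
        ENNReal.ofReal ((fourierTransform D Φ ω).re) := by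
  refine lintegral_mono fun ω => ?_
  refine ENNReal.div_le_div_right ?_ _
  rw [WSE.fourier_conv D f (normIndicator D l) hf (WSE.normIndicator_integrable D l) ω]
  have h1 : ‖fourierTransform D f ω * fourierTransform D (normIndicator D l) ω‖₊
      ≤ ‖fourierTransform D f ω‖₊ := by
    rw [nnnorm_mul]
    calc ‖fourierTransform D f ω‖₊ * ‖fourierTransform D (normIndicator D l) ω‖₊
        ≤ ‖fourierTransform D f ω‖₊ * 1 := by
          have hle : ‖fourierTransform D (normIndicator D l) ω‖₊ ≤ 1 := by
            have := WSE.norm_fourier_normIndicator_le D l hl ω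
            exact_mod_cast this
          exact mul_le_mul_right hle _
      _ = ‖fourierTransform D f ω‖₊ := mul_one _
  have h2 : (‖fourierTransform D f ω * fourierTransform D (normIndicator D l) ω‖₊ : ℝ≥0∞)
      ≤ (‖fourierTransform D f ω‖₊ : ℝ≥0∞) := ENNReal.coe_le_coe.2 h1
  exact pow_le_pow_left' h2 2
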